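/- For every instance (B, 𝓛, δ) of polyline bundle simplification and every choice of orientation of the polylines, the minimum size of a star cover is at most the minimum size of a valid simplification: OPT_StCo ≤ OPT_PBS. -/

import Mathlib

/-- Points of the Euclidean plane. -/
abbrev Pt := EuclideanSpace ℝ (Fin 2)

/-- The arc parametrization `c_L : [1, m] → ℝ²` of a polyline given by the list `L` of
its `m` bend points (1-based indexing):
`c_L(x) = (⌊x⌋ + 1 − x)·b_⌊x⌋ + (x − ⌊x⌋)·b_⌈x⌉`. -/
noncomputable def arcParam (L : List Pt) (x : ℝ) : Pt :=
  ((⌊x⌋₊ : ℝ) + 1 - x) • L.getD (⌊x⌋₊ - 1) 0 + (x - (⌊x⌋₊ : ℝ)) • L.getD (⌈x⌉₊ - 1) 0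

/-- The Fréchet distance between two polylines `L₁, L₂` (lists of points in the plane). -/
noncomputable def frechetDist (L₁ L₂ : List Pt) : ℝ :=
  sInf { d : ℝ | ∃ α β : ℝ → ℝ,
    ContinuousOn α (Set.Icc 0 1) ∧ ContinuousOn β (Set.Icc 0 1) ∧
    MonotoneOn α (Set.Icc 0 1) ∧ MonotoneOn β (Set.Icc 0 1) ∧
    α 0 = 1 ∧ β 0 = 1 ∧ α 1 = L₁.length ∧ β 1 = L₂.length ∧
    d = sSup { e : ℝ | ∃ t ∈ Set.Icc (0 : ℝ) 1,
          e = ‖arcParam L₁ (α t) - arcParam L₂ (β t)‖ } }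

/-- A polyline: a list of at least two bend points in which each bend appears at most
once. -/
structure Polyline where
  pts : List Pt
  two_le : 2 ≤ pts.length
  nodup : pts.Nodup

/-- An instance `(B, 𝓛, δ)` of polyline bundle simplification: a finite set `B` of bend
points, a bundle of `numLines` polylines whose bends all belong to `B`, and a positive
distance threshold `δ`. -/
structure PBSInstance where
  B : Finset Pt
  numLines : ℕ
  line : Fin numLines → Polyline
  δ : ℝ
  δ_pos : 0 < δ
  bends_mem : ∀ i : Fin numLines, ∀ p ∈ (line i).pts, p ∈ B

/-- `(u, v)` (0-based indices into `L`) is a valid shortcut of the polyline `L` with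
threshold `δ`: `u` comes before `v` and the Fréchet distance between the line segment
from `L[u]` to `L[v]` and the sub-polyline `L[u..v]` is at most `δ`. -/
def IsShortcut (δ : ℝ) (L : List Pt) (u v : ℕ) : Prop :=
  u < v ∧ v < L.length ∧
    frechetDist [L.getD u 0, L.getD v 0] ((L.drop u).take (v - u + 1)) ≤ δ

/-- `B'` is a valid simplification of the PBS instance `I` with threshold `δ`: `B' ⊆ B`,
every polyline keeps its start and end point, and every segment of the induced
simplification (i.e. every pair of retained bends with no retained bend in between) has
Fréchet distance at most `δ` to the corresponding sub-polyline. -/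
def IsValidSimplification (I : PBSInstance) (δ : ℝ) (B' : Set Pt) : Prop :=
  B' ⊆ ↑I.B ∧ ∀ i : Fin I.numLines,
    (I.line i).pts.getD 0 0 ∈ B' ∧
    (I.line i).pts.getD ((I.line i).pts.length - 1) 0 ∈ B' ∧
    ∀ p q : ℕ, p < q → q < (I.line i).pts.length →
      (I.line i).pts.getD p 0 ∈ B' → (I.line i).pts.getD q 0 ∈ B' →
      (∀ r : ℕ, p < r → r < q → (I.line i).pts.getD r 0 ∉ B') →
      frechetDist [(I.line i).pts.getD p 0, (I.line i).pts.getD q 0]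
        (((I.line i).pts.drop p).take (q - p + 1)) ≤ δ

/-- `OPT_PBS`: the minimum size of a valid simplification of the instance `I`. -/
noncomputable def optPBS (I : PBSInstance) : ℕ :=
  sInf { k : ℕ | ∃ B' : Set Pt, IsValidSimplification I I.δ B' ∧ B'.ncard = k }

/-- The `i`-th polyline of `I` after fixing an orientation: either the polyline itself or
its reversal. -/
def orientedLine (I : PBSInstance) (ori : Fin I.numLines → Bool) (i : Fin I.numLines) :
    List Pt :=
  if ori i then (I.line i).pts else (I.line i).pts.reverse

/-- A star: a central bend `central ∈ B` together with, for each polyline containing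
`central`, at most one incoming shortcut `(u, central)` (with respect to the fixed
orientations). -/
structure PBSStar (I : PBSInstance) (ori : Fin I.numLines → Bool) where
  central : Pt
  central_mem : central ∈ I.B
  sc : Fin I.numLines → Option ℕ
  sc_spec : ∀ i : Fin I.numLines, ∀ u : ℕ, sc i = some u →
    ∃ v : ℕ, v < (orientedLine I ori i).length ∧
      (orientedLine I ori i).getD v 0 = central ∧
      IsShortcut I.δ (orientedLine I ori i) u v

/-- The star `s` covers the segment–polyline pair given by polyline `i` and the segment
between positions `k` and `k+1` of the oriented polyline: `s` contains a shortcut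
`(u, central)` of polyline `i` and the segment lies between `u` and the position of
`central`. -/
def PBSStar.covers {I : PBSInstance} {ori : Fin I.numLines → Bool} (s : PBSStar I ori)
    (i : Fin I.numLines) (k : ℕ) : Prop :=
  ∃ u : ℕ, s.sc i = some u ∧
    ∃ v : ℕ, v < (orientedLine I ori i).length ∧
      (orientedLine I ori i).getD v 0 = s.central ∧ u ≤ k ∧ k < v

/-- A star cover: a set of stars covering all segment–polyline pairs of the instance. -/
def IsStarCover (I : PBSInstance) (ori : Fin I.numLines → Bool)
    (C : Set (PBSStar I ori)) : Prop :=
  ∀ i : Fin I.numLines, ∀ k : ℕ, k + 1 < (orientedLine I ori i).length →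
    ∃ s ∈ C, s.covers i k

/-- `OPT_StCo`: the minimum size of a star cover of the instance `I` with fixed
orientations `ori`. -/
noncomputable def optStCo (I : PBSInstance) (ori : Fin I.numLines → Bool) : ℕ :=
  sInf { k : ℕ | ∃ C : Set (PBSStar I ori), C.Finite ∧ IsStarCover I ori C ∧ C.ncard = k }

namespace PBSAux

def FSet (L₁ L₂ : List Pt) : Set ℝ :=
  { d : ℝ | ∃ α β : ℝ → ℝ,
    ContinuousOn α (Set.Icc 0 1) ∧ ContinuousOn β (Set.Icc 0 1) ∧
    MonotoneOn α (Set.Icc 0 1) ∧ MonotoneOn β (Set.Icc 0 1) ∧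
    α 0 = 1 ∧ β 0 = 1 ∧ α 1 = L₁.length ∧ β 1 = L₂.length ∧
    d = sSup { e : ℝ | ∃ t ∈ Set.Icc (0 : ℝ) 1,
          e = ‖arcParam L₁ (α t) - arcParam L₂ (β t)‖ } }

lemma frechetDist_eq (L₁ L₂ : List Pt) : frechetDist L₁ L₂ = sInf (FSet L₁ L₂) := rfl

lemma FSet_nonneg {L₁ L₂ : List Pt} {d : ℝ} (hd : d ∈ FSet L₁ L₂) : 0 ≤ d := by
  obtain ⟨α, β, -, -, -, -, -, -, -, -, rfl⟩ := hd
  apply Real.sSup_nonneg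
  rintro e ⟨t, ht, rfl⟩
  positivity

lemma FSet_bddBelow (L₁ L₂ : List Pt) : BddBelow (FSet L₁ L₂) :=
  ⟨0, fun _ hd => FSet_nonneg hd⟩

/-- The standard affine parametrization witness. -/
lemma affine_witness (L : List Pt) (h : 1 ≤ L.length) :
    ContinuousOn (fun t : ℝ => 1 + t * ((L.length : ℝ) - 1)) (Set.Icc 0 1) ∧
    MonotoneOn (fun t : ℝ => 1 + t * ((L.length : ℝ) - 1)) (Set.Icc 0 1) ∧
    (1 + (0:ℝ) * ((L.length : ℝ) - 1) = 1) ∧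
    (1 + (1:ℝ) * ((L.length : ℝ) - 1) = L.length) := by
  have hlen : (1:ℝ) ≤ L.length := by exact_mod_cast h
  refine ⟨(continuous_const.add (continuous_id.mul continuous_const)).continuousOn, ?_, by ring,
    by ring⟩
  intro a _ b _ hab
  have : (0:ℝ) ≤ (L.length : ℝ) - 1 := by linarith
  simp only
  nlinarith

lemma FSet_nonempty (L₁ L₂ : List Pt) (h₁ : 1 ≤ L₁.length) (h₂ : 1 ≤ L₂.length) :
    (FSet L₁ L₂).Nonempty := by
  obtain ⟨hc₁, hm₁, h0₁, h1₁⟩ := affine_witness L₁ h₁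
  obtain ⟨hc₂, hm₂, h0₂, h1₂⟩ := affine_witness L₂ h₂
  exact ⟨_, _, _, hc₁, hc₂, hm₁, hm₂, h0₁, h0₂, h1₁, h1₂, rfl⟩

lemma frechetDist_self_nonpos (L : List Pt) (h : 1 ≤ L.length) : frechetDist L L ≤ 0 := by
  obtain ⟨hc, hm, h0, h1⟩ := affine_witness L h
  rw [frechetDist_eq]
  apply csInf_le (FSet_bddBelow L L)
  refine ⟨_, _, hc, hc, hm, hm, h0, h0, h1, h1, ?_⟩
  have hset : { e : ℝ | ∃ t ∈ Set.Icc (0 : ℝ) 1,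
      e = ‖arcParam L (1 + t * ((L.length : ℝ) - 1)) - arcParam L (1 + t * ((L.length : ℝ) - 1))‖ }
      = {0} := by
    ext e
    simp only [Set.mem_setOf_eq, Set.mem_singleton_iff, sub_self, norm_zero]
    constructor
    · rintro ⟨t, -, rfl⟩; rfl
    · rintro rfl; exact ⟨0, ⟨le_refl _, zero_le_one⟩, rfl⟩
  rw [hset, csSup_singleton]

lemma arcParam_reverse (L : List Pt) (x : ℝ) (hx1 : 1 ≤ x) (hxm : x ≤ L.length) :
    arcParam L.reverse ((L.length : ℝ) + 1 - x) = arcParam L x := by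
  set m := L.length with hm
  have hm1 : 1 ≤ m := by exact_mod_cast le_trans hx1 hxm
  set n := ⌊x⌋₊ with hn
  have hn1 : 1 ≤ n := Nat.le_floor (by exact_mod_cast hx1)
  have hnm : n ≤ m := by
    have := Nat.floor_le_floor hxm
    rwa [Nat.floor_natCast] at this
  have hnx : (n : ℝ) ≤ x := Nat.floor_le (by linarith)
  by_cases hint : (n : ℝ) = x
  · -- x is an integer
    have hy : (m : ℝ) + 1 - x = ((m + 1 - n : ℕ) : ℝ) := by
      rw [← hint]; push_cast [Nat.cast_sub (le_trans hnm (Nat.le_succ m))]; ring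
    have hceilx : ⌈x⌉₊ = n := by rw [← hint, Nat.ceil_natCast]
    rw [hy]
    unfold arcParam
    rw [Nat.floor_natCast, Nat.ceil_natCast, hceilx, ← hn]
    have h1 : ((m + 1 - n : ℕ) : ℝ) + 1 - ((m + 1 - n : ℕ) : ℝ) = 1 := by ring
    have h2 : ((m + 1 - n : ℕ) : ℝ) - ((m + 1 - n : ℕ) : ℝ) = 0 := by ring
    have h3 : (n : ℝ) + 1 - x = 1 := by rw [← hint]; ring
    have h4 : x - (n : ℝ) = 0 := by rw [← hint]; ring
    rw [h1, h2, h3, h4]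
    have hidx : m + 1 - n - 1 < L.reverse.length := by simp; omega
    have hidx2 : n - 1 < L.length := by omega
    simp only [one_smul, zero_smul, add_zero]
    rw [List.getD_eq_getElem _ _ hidx, List.getD_eq_getElem _ _ hidx2,
      List.getElem_reverse]
    congr 1
    omega
  · -- x is not an integer
    have hlt : (n : ℝ) < x := lt_of_le_of_ne hnx hint
    have hxn1 : x < (n : ℝ) + 1 := Nat.lt_floor_add_one x
    have hnm' : n + 1 ≤ m := by
      have : (n : ℝ) < m := lt_of_lt_of_le hlt hxm
      have : n < m := by exact_mod_cast this
      omega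
    have hceilx : ⌈x⌉₊ = n + 1 := by
      rw [Nat.ceil_eq_iff (by omega)]
      constructor
      · push_cast; simpa using hlt
      · push_cast; linarith
    set y := (m : ℝ) + 1 - x with hy
    have hfy : ⌊y⌋₊ = m - n := by
      rw [Nat.floor_eq_iff (by simp [hy]; linarith)]
      push_cast [Nat.cast_sub hnm]
      constructor <;> [skip; skip] <;> simp [hy] <;> linarith
    have hcy : ⌈y⌉₊ = m - n + 1 := by
      rw [Nat.ceil_eq_iff (by omega)]
      push_cast [Nat.cast_sub hnm]
      constructor <;> simp [hy] <;> linarith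
    unfold arcParam
    rw [hfy, hcy, ← hn, hceilx]
    have c1 : ((m - n : ℕ) : ℝ) + 1 - y = x - n := by
      push_cast [Nat.cast_sub hnm]; rw [hy]; ring
    have c2 : y - ((m - n : ℕ) : ℝ) = (n : ℝ) + 1 - x := by
      push_cast [Nat.cast_sub hnm]; rw [hy]; ring
    rw [c1, c2]
    have hi1 : m - n - 1 < L.reverse.length := by simp; omega
    have hi2 : m - n + 1 - 1 < L.reverse.length := by simp; omega
    have hi3 : n - 1 < L.length := by omega
    have hi4 : n + 1 - 1 < L.length := by omega
    rw [List.getD_eq_getElem _ _ hi1, List.getD_eq_getElem _ _ hi2,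
      List.getD_eq_getElem _ _ hi3, List.getD_eq_getElem _ _ hi4,
      List.getElem_reverse, List.getElem_reverse]
    rw [add_comm]
    have e1 : L.length - 1 - (m - n - 1) = n + 1 - 1 := by omega
    have e2 : L.length - 1 - (m - n + 1 - 1) = n - 1 := by omega
    congr 1 <;> simp only [e1, e2]


lemma FSet_reverse_subset (L₁ L₂ : List Pt) : FSet L₁ L₂ ⊆ FSet L₁.reverse L₂.reverse := by
  rintro d ⟨α, β, hcα, hcβ, hmα, hmβ, hα0, hβ0, hα1, hβ1, rfl⟩
  have key : ∀ (L : List Pt) (γ : ℝ → ℝ), MonotoneOn γ (Set.Icc 0 1) → γ 0 = 1 →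
      γ 1 = L.length → ∀ t ∈ Set.Icc (0:ℝ) 1,
      arcParam L.reverse ((L.length : ℝ) + 1 - γ t) = arcParam L (γ t) := by
    intro L γ hm h0 h1 t ht
    have h1t : (1:ℝ) ∈ Set.Icc (0:ℝ) 1 := ⟨zero_le_one, le_refl _⟩
    have h0t : (0:ℝ) ∈ Set.Icc (0:ℝ) 1 := ⟨le_refl _, zero_le_one⟩
    have hge : 1 ≤ γ t := h0 ▸ hm h0t ht ht.1
    have hle : γ t ≤ L.length := h1 ▸ hm ht h1t ht.2
    exact arcParam_reverse L (γ t) hge hle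
  have hmem : ∀ t : ℝ, t ∈ Set.Icc (0:ℝ) 1 → 1 - t ∈ Set.Icc (0:ℝ) 1 := by
    intro t ht; exact ⟨by linarith [ht.2], by linarith [ht.1]⟩
  refine ⟨fun t => (L₁.length : ℝ) + 1 - α (1 - t), fun t => (L₂.length : ℝ) + 1 - β (1 - t),
    ?_, ?_, ?_, ?_, ?_, ?_, ?_, ?_, ?_⟩
  · exact continuous_const.continuousOn.sub
      (hcα.comp (continuous_const.sub continuous_id).continuousOn hmem)
  · exact continuous_const.continuousOn.sub
      (hcβ.comp (continuous_const.sub continuous_id).continuousOn hmem)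
  · intro a ha b hb hab
    have := hmα (hmem b hb) (hmem a ha) (by linarith)
    simp only; linarith
  · intro a ha b hb hab
    have := hmβ (hmem b hb) (hmem a ha) (by linarith)
    simp only; linarith
  · simp only [sub_zero, hα1]; ring
  · simp only [sub_zero, hβ1]; ring
  · simp only [sub_self, hα0, List.length_reverse]; ring
  · simp only [sub_self, hβ0, List.length_reverse]; ring
  · congr 1
    ext e
    simp only [Set.mem_setOf_eq]
    constructor
    · rintro ⟨t, ht, rfl⟩
      refine ⟨1 - t, hmem t ht, ?_⟩
      have h11 : (1 : ℝ) - (1 - t) = t := by ring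
      rw [h11, key L₁ α hmα hα0 hα1 t ht, key L₂ β hmβ hβ0 hβ1 t ht]
    · rintro ⟨t, ht, rfl⟩
      refine ⟨1 - t, hmem t ht, ?_⟩
      rw [key L₁ α hmα hα0 hα1 (1 - t) (hmem t ht), key L₂ β hmβ hβ0 hβ1 (1 - t) (hmem t ht)]

lemma frechetDist_reverse_le (L₁ L₂ : List Pt) (h₁ : 1 ≤ L₁.length) (h₂ : 1 ≤ L₂.length) :
    frechetDist L₁.reverse L₂.reverse ≤ frechetDist L₁ L₂ := by
  rw [frechetDist_eq, frechetDist_eq]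
  exact csInf_le_csInf (FSet_bddBelow _ _) (FSet_nonempty L₁ L₂ h₁ h₂) (FSet_reverse_subset L₁ L₂)


lemma getD_reverse (L : List Pt) (r : ℕ) (hr : r < L.length) :
    L.reverse.getD r 0 = L.getD (L.length - 1 - r) 0 := by
  rw [List.getD_eq_getElem _ _ (by simp; omega), List.getD_eq_getElem _ _ (by omega),
    List.getElem_reverse]

lemma slice_two (L : List Pt) (p : ℕ) (h : p + 1 < L.length) :
    (L.drop p).take 2 = [L.getD p 0, L.getD (p + 1) 0] := by
  apply List.ext_getElem
  · simp; omega
  · intro i h1 h2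
    have hi2 : i < 2 := by simpa using h2
    rw [List.getElem_take, List.getElem_drop,
      List.getD_eq_getElem _ 0 (show p < L.length by omega), List.getD_eq_getElem _ 0 h]
    interval_cases i
    · rfl
    · rfl

lemma slice_reverse (L : List Pt) (u v : ℕ) (huv : u ≤ v) (hv : v < L.length) :
    (L.reverse.drop (L.length - 1 - v)).take (v - u + 1)
      = ((L.drop u).take (v - u + 1)).reverse := by
  apply List.ext_getElem
  · simp; omega
  · intro i h1 h2
    simp only [List.length_take, List.length_drop, List.length_reverse, lt_min_iff] at h1 h2
    rw [List.getElem_take, List.getElem_drop, List.getElem_reverse, List.getElem_reverse]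
    rw [List.getElem_take, List.getElem_drop]
    congr 1
    simp only [List.length_take, List.length_drop]
    omega

lemma seg_reverse_transfer (L : List Pt) (δ : ℝ) (p q : ℕ) (hpq : p < q) (hq : q < L.length)
    (key : frechetDist [L.getD (L.length - 1 - q) 0, L.getD (L.length - 1 - p) 0]
      ((L.drop (L.length - 1 - q)).take ((L.length - 1 - p) - (L.length - 1 - q) + 1)) ≤ δ) :
    frechetDist [L.reverse.getD p 0, L.reverse.getD q 0]
      ((L.reverse.drop p).take (q - p + 1)) ≤ δ := by
  have e1 : L.reverse.getD p 0 = L.getD (L.length - 1 - p) 0 := getD_reverse _ _ (by omega)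
  have e2 : L.reverse.getD q 0 = L.getD (L.length - 1 - q) 0 := getD_reverse _ _ hq
  have hcnt : (L.length - 1 - p) - (L.length - 1 - q) + 1 = q - p + 1 := by omega
  rw [hcnt] at key
  have e3 : (L.reverse.drop p).take (q - p + 1)
      = ((L.drop (L.length - 1 - q)).take (q - p + 1)).reverse := by
    have h3 := slice_reverse L (L.length - 1 - q) (L.length - 1 - p) (by omega) (by omega)
    rw [show L.length - 1 - (L.length - 1 - p) = p from by omega, hcnt] at h3
    exact h3
  have e4 : [L.getD (L.length - 1 - q) 0, L.getD (L.length - 1 - p) 0].reverse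
      = [L.getD (L.length - 1 - p) 0, L.getD (L.length - 1 - q) 0] := by
    simp
  rw [e1, e2, ← e4, e3]
  refine le_trans (frechetDist_reverse_le _ _ (by simp) ?_) key
  simp only [List.length_take, List.length_drop]
  omega

lemma orientedLine_length (I : PBSInstance) (ori : Fin I.numLines → Bool) (i : Fin I.numLines) :
    (orientedLine I ori i).length = (I.line i).pts.length := by
  unfold orientedLine; split <;> simp

lemma orientedLine_two_le (I : PBSInstance) (ori : Fin I.numLines → Bool) (i : Fin I.numLines) :
    2 ≤ (orientedLine I ori i).length := by
  rw [orientedLine_length]; exact (I.line i).two_le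

lemma orientedLine_nodup (I : PBSInstance) (ori : Fin I.numLines → Bool) (i : Fin I.numLines) :
    (orientedLine I ori i).Nodup := by
  unfold orientedLine; split
  · exact (I.line i).nodup
  · exact List.nodup_reverse.2 (I.line i).nodup

section Valid

variable {I : PBSInstance} {ori : Fin I.numLines → Bool} {B' : Set Pt}
  (hB' : IsValidSimplification I I.δ B')

include hB'

lemma oriented_start (i : Fin I.numLines) : (orientedLine I ori i).getD 0 0 ∈ B' := by
  have h2 := (I.line i).two_le
  unfold orientedLine; split
  · exact (hB'.2 i).1
  · rw [getD_reverse _ _ (by omega)]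
    have : (I.line i).pts.length - 1 - 0 = (I.line i).pts.length - 1 := by omega
    rw [this]
    exact (hB'.2 i).2.1

lemma oriented_end (i : Fin I.numLines) :
    (orientedLine I ori i).getD ((orientedLine I ori i).length - 1) 0 ∈ B' := by
  have h2 := (I.line i).two_le
  unfold orientedLine; split
  · exact (hB'.2 i).2.1
  · rw [List.length_reverse, getD_reverse _ _ (by omega)]
    have : (I.line i).pts.length - 1 - ((I.line i).pts.length - 1) = 0 := by omega
    rw [this]
    exact (hB'.2 i).1

lemma oriented_seg (i : Fin I.numLines) (p q : ℕ) (hpq : p < q)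
    (hq : q < (orientedLine I ori i).length)
    (hp' : (orientedLine I ori i).getD p 0 ∈ B')
    (hq' : (orientedLine I ori i).getD q 0 ∈ B')
    (hgap : ∀ r : ℕ, p < r → r < q → (orientedLine I ori i).getD r 0 ∉ B') :
    frechetDist [(orientedLine I ori i).getD p 0, (orientedLine I ori i).getD q 0]
      (((orientedLine I ori i).drop p).take (q - p + 1)) ≤ I.δ := by
  have h2 := (I.line i).two_le
  by_cases h : ori i
  · simp only [orientedLine, if_pos h] at hq hp' hq' hgap ⊢
    exact (hB'.2 i).2.2 p q hpq hq hp' hq' hgap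
  · simp only [orientedLine, if_neg h] at hq hp' hq' hgap ⊢
    rw [List.length_reverse] at hq
    apply seg_reverse_transfer _ _ p q hpq hq
    apply (hB'.2 i).2.2 ((I.line i).pts.length - 1 - q) ((I.line i).pts.length - 1 - p)
      (by omega) (by omega)
    · rw [← getD_reverse _ q hq]; exact hq'
    · have hrw : (I.line i).pts.getD ((I.line i).pts.length - 1 - p) 0
          = (I.line i).pts.reverse.getD p 0 := (getD_reverse _ p (by omega)).symm
      rw [hrw]; exact hp'
    · intro r hr1 hr2
      have hrw : (I.line i).pts.getD r 0
          = (I.line i).pts.reverse.getD ((I.line i).pts.length - 1 - r) 0 := by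
        rw [getD_reverse _ ((I.line i).pts.length - 1 - r) (by omega)]
        congr 1
        omega
      rw [hrw]
      exact hgap ((I.line i).pts.length - 1 - r) (by omega) (by omega)

omit hB' in
lemma valid_all (I : PBSInstance) : IsValidSimplification I I.δ ↑I.B := by
  constructor
  · exact subset_rfl
  · intro i
    have h2 := (I.line i).two_le
    have hmem : ∀ r, r < (I.line i).pts.length → (I.line i).pts.getD r 0 ∈ (↑I.B : Set Pt) := by
      intro r hr
      rw [List.getD_eq_getElem _ _ hr]
      exact I.bends_mem i _ (List.getElem_mem hr)
    refine ⟨hmem 0 (by omega), hmem _ (by omega), ?_⟩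
    intro p q hpq hq hp' hq' hgap
    have hq1 : q = p + 1 := by
      by_contra hne
      exact hgap (p + 1) (by omega) (by omega) (hmem (p + 1) (by omega))
    subst hq1
    have h21 : p + 1 - p + 1 = 2 := by omega
    rw [h21, slice_two _ _ hq]
    exact le_trans (frechetDist_self_nonpos _ (by simp)) I.δ_pos.le

open Classical in
/-- The star centered at a retained bend `b`, with for each polyline the incoming
shortcut from the previous retained bend. -/
noncomputable def mkStar (b : Pt) (hb : b ∈ B') : PBSStar I ori where
  central := b
  central_mem := hB'.1 hb
  sc := fun i =>
    if h : b ∈ orientedLine I ori i ∧ 0 < (orientedLine I ori i).idxOf b then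
      some (Nat.findGreatest (fun r => (orientedLine I ori i).getD r 0 ∈ B')
        ((orientedLine I ori i).idxOf b - 1))
    else none
  sc_spec := by
    classical
    intro i u hu
    by_cases h : b ∈ orientedLine I ori i ∧ 0 < (orientedLine I ori i).idxOf b
    · rw [dif_pos h] at hu
      set M := orientedLine I ori i with hM
      set v := M.idxOf b with hv
      have hvlt : v < M.length := List.idxOf_lt_length_iff.2 h.1
      have hgetv : M.getD v 0 = b := by
        rw [List.getD_eq_getElem _ _ hvlt]; exact List.getElem_idxOf hvlt
      have hu' : u = Nat.findGreatest (fun r => M.getD r 0 ∈ B') (v - 1) :=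
        (Option.some_inj.1 hu).symm
      have hule : u ≤ v - 1 := hu' ▸ Nat.findGreatest_le _
      have hP0 : M.getD 0 0 ∈ B' := oriented_start hB' i
      have hPu : M.getD u 0 ∈ B' := by
        rw [hu']
        exact Nat.findGreatest_spec (P := fun r => M.getD r 0 ∈ B') (Nat.zero_le _) hP0
      refine ⟨v, hvlt, hgetv, ?_, hvlt, ?_⟩
      · have := h.2; omega
      · apply oriented_seg hB' i u v (by have := h.2; omega) hvlt hPu (hgetv ▸ hb)
        intro r hr1 hr2
        exact Nat.findGreatest_is_greatest (P := fun r => M.getD r 0 ∈ B')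
          (n := v - 1) (hu' ▸ hr1) (by omega)
    · rw [dif_neg h] at hu
      exact absurd hu (by simp)

end Valid

end PBSAux

/-- Lemma 4.1: for every PBS instance and every choice of orientations, the minimum size
of a star cover is at most the minimum size of a valid simplification:
`OPT_StCo ≤ OPT_PBS`. -/
theorem optStCo_le_optPBS (I : PBSInstance) (ori : Fin I.numLines → Bool) :
    optStCo I ori ≤ optPBS I := by
  classical
  have hne : {k : ℕ | ∃ B' : Set Pt, IsValidSimplification I I.δ B' ∧ B'.ncard = k}.Nonempty :=
    ⟨(↑I.B : Set Pt).ncard, ↑I.B, PBSAux.valid_all I, rfl⟩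
  obtain ⟨B', hB', hcard⟩ : optPBS I ∈ _ := Nat.sInf_mem hne
  by_cases hl : I.numLines = 0
  · have h0 : (0 : ℕ) ∈ {k : ℕ | ∃ C : Set (PBSStar I ori),
        C.Finite ∧ IsStarCover I ori C ∧ C.ncard = k} := by
      refine ⟨∅, Set.finite_empty, ?_, Set.ncard_empty _⟩
      intro i
      exact absurd i.2 (by omega)
    exact le_trans (Nat.sInf_le h0) (Nat.zero_le _)
  · have hb₀ : (orientedLine I ori ⟨0, Nat.pos_of_ne_zero hl⟩).getD 0 0 ∈ B' :=
      PBSAux.oriented_start hB' _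
    set f : Pt → PBSStar I ori := fun b =>
      if h : b ∈ B' then PBSAux.mkStar hB' b h else PBSAux.mkStar hB' _ hb₀ with hf
    have hfin : B'.Finite := Set.Finite.subset I.B.finite_toSet hB'.1
    have hcover : IsStarCover I ori (f '' B') := by
      intro i k hk
      set M := orientedLine I ori i with hM
      set n := M.length with hn
      have hn2 : 2 ≤ n := PBSAux.orientedLine_two_le I ori i
      have hend : M.getD (n - 1) 0 ∈ B' := PBSAux.oriented_end hB' i
      have hQ : ∃ r, k < r ∧ M.getD r 0 ∈ B' := ⟨n - 1, by omega, hend⟩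
      set q := Nat.find hQ with hq
      obtain ⟨hkq, hqB⟩ : k < q ∧ M.getD q 0 ∈ B' := Nat.find_spec hQ
      have hqle : q ≤ n - 1 := Nat.find_min' hQ ⟨by omega, hend⟩
      have hqlt : q < n := by omega
      set b := M.getD q 0 with hb
      have hfb : f b = PBSAux.mkStar hB' b hqB := dif_pos hqB
      refine ⟨f b, ⟨b, hqB, rfl⟩, ?_⟩
      rw [hfb]
      have hbM : b ∈ M := by
        rw [hb, List.getD_eq_getElem _ _ hqlt]
        exact List.getElem_mem hqlt
      have hidx : M.idxOf b = q := by
        rw [hb, List.getD_eq_getElem _ _ hqlt]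
        exact List.Nodup.idxOf_getElem (PBSAux.orientedLine_nodup I ori i) q hqlt
      have hcond : b ∈ M ∧ 0 < M.idxOf b := ⟨hbM, by omega⟩
      set u := Nat.findGreatest (fun r => M.getD r 0 ∈ B') (M.idxOf b - 1) with hu
      have hsc : (PBSAux.mkStar hB' b hqB).sc i = some u := dif_pos hcond
      have hPu : M.getD u 0 ∈ B' := by
        rw [hu]
        exact Nat.findGreatest_spec (P := fun r => M.getD r 0 ∈ B') (Nat.zero_le _)
          (PBSAux.oriented_start hB' i)
      have hule : u ≤ M.idxOf b - 1 := Nat.findGreatest_le _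
      have huk : u ≤ k := by
        by_contra hcon
        push_neg at hcon
        have huq : u < q := by omega
        exact (Nat.find_min hQ huq) ⟨by omega, hPu⟩
      exact ⟨u, hsc, q, hqlt, rfl, huk, hkq⟩
    have hmemSt : (f '' B').ncard ∈ {k : ℕ | ∃ C : Set (PBSStar I ori),
        C.Finite ∧ IsStarCover I ori C ∧ C.ncard = k} :=
      ⟨f '' B', hfin.image f, hcover, rfl⟩
    calc optStCo I ori ≤ (f '' B').ncard := Nat.sInf_le hmemSt
      _ ≤ B'.ncard := Set.ncard_image_le hfin
      _ = optPBS I := hcard
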